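/- Let ρ_AB be a bipartite density operator such that ‖C_{AB}‖_q is computed in a basis where each local Bloch vector is supported on a single basis element. Then for every q ≥ 1: ‖C_{AB}‖_q ≥ √(d_B−1)·‖C_A‖_q + √(d_A−1)·‖C_B‖_q − √(d_A−1)·√(d_B−1). -/

import Mathlib

open Matrix
open scoped ComplexOrder Kronecker

section CorrAux

lemma kron_conjTranspose' {m n : ℕ} (A : Matrix (Fin m) (Fin m) ℂ) (B : Matrix (Fin n) (Fin n) ℂ) :
    (A ⊗ₖ B)ᴴ = Aᴴ ⊗ₖ Bᴴ := by
  ext ⟨i, j⟩ ⟨k, l⟩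
  simp [conjTranspose_apply, Matrix.kroneckerMap_apply, star_mul']

lemma sub_kron' {m n : ℕ} (A B : Matrix (Fin m) (Fin m) ℂ) (C : Matrix (Fin n) (Fin n) ℂ) :
    (A - B) ⊗ₖ C = A ⊗ₖ C - B ⊗ₖ C := by
  ext ⟨i, j⟩ ⟨k, l⟩
  simp [Matrix.kroneckerMap_apply, sub_mul]

lemma kron_sub' {m n : ℕ} (A : Matrix (Fin m) (Fin m) ℂ) (B C : Matrix (Fin n) (Fin n) ℂ) :
    A ⊗ₖ (B - C) = A ⊗ₖ B - A ⊗ₖ C := by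
  ext ⟨i, j⟩ ⟨k, l⟩
  simp [Matrix.kroneckerMap_apply, mul_sub]

lemma smul_kron' {m n : ℕ} (r : ℂ) (A : Matrix (Fin m) (Fin m) ℂ) (B : Matrix (Fin n) (Fin n) ℂ) :
    (r • A) ⊗ₖ B = r • (A ⊗ₖ B) := by
  ext ⟨i, j⟩ ⟨k, l⟩
  simp [Matrix.kroneckerMap_apply]
  ring

lemma kron_smul' {m n : ℕ} (r : ℂ) (A : Matrix (Fin m) (Fin m) ℂ) (B : Matrix (Fin n) (Fin n) ℂ) :
    A ⊗ₖ (r • B) = r • (A ⊗ₖ B) := by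
  ext ⟨i, j⟩ ⟨k, l⟩
  simp [Matrix.kroneckerMap_apply]
  ring

lemma kron_posSemidef' {m n : ℕ} {A : Matrix (Fin m) (Fin m) ℂ} {B : Matrix (Fin n) (Fin n) ℂ}
    (hA : A.PosSemidef) (hB : B.PosSemidef) : (A ⊗ₖ B).PosSemidef := by
  exact hA.kronecker hB

lemma psd_trace_nonneg' {m : Type*} [Fintype m] [DecidableEq m] {M : Matrix m m ℂ} (hM : M.PosSemidef) :
    0 ≤ M.trace := by
  refine Finset.sum_nonneg fun i _ => ?_
  have h := hM.dotProduct_mulVec_nonneg (Pi.single i 1)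
  simpa [dotProduct, Pi.single_apply, Matrix.mulVec, Finset.sum_ite_eq,
    Finset.sum_ite_eq'] using h

open scoped MatrixOrder in
lemma trace_mul_psd_nonneg' {m : Type*} [Fintype m] [DecidableEq m] {ρ M : Matrix m m ℂ}
    (hρ : ρ.PosSemidef) (hM : M.PosSemidef) : 0 ≤ (ρ * M).trace := by
  have hpsd := hM.conjTranspose_mul_mul_same (CFC.sqrt ρ)
  rw [(CFC.sqrt_nonneg ρ).posSemidef.1.eq] at hpsd
  have h1 : (ρ * M).trace = (CFC.sqrt ρ * M * CFC.sqrt ρ).trace := by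
    conv_lhs => rw [← CFC.sqrt_mul_sqrt_self ρ hρ.nonneg]
    rw [Matrix.mul_assoc, Matrix.trace_mul_comm, Matrix.mul_assoc]
  rw [h1]
  exact psd_trace_nonneg' hpsd

lemma trace_eq_sum_eig' {d : ℕ} {Z : Matrix (Fin d) (Fin d) ℂ} (hZ : Z.IsHermitian) :
    Z.trace = ((∑ k, hZ.eigenvalues k : ℝ) : ℂ) := by
  conv_lhs => rw [hZ.spectral_theorem, Unitary.conjStarAlgAut_apply]
  rw [Matrix.trace_mul_cycle, mem_unitaryGroup_iff'.mp hZ.eigenvectorUnitary.2, one_mul,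
    Matrix.trace_diagonal]
  push_cast
  rfl

lemma trace_sq_eq_sum_eig' {d : ℕ} {Z : Matrix (Fin d) (Fin d) ℂ} (hZ : Z.IsHermitian) :
    (Z * Z).trace = ((∑ k, (hZ.eigenvalues k) ^ 2 : ℝ) : ℂ) := by
  set U := (hZ.eigenvectorUnitary : Matrix (Fin d) (Fin d) ℂ) with hUdef
  have hU1 : U * star U = 1 := mem_unitaryGroup_iff.mp hZ.eigenvectorUnitary.2
  have hD : star U * Z * U = diagonal (RCLike.ofReal ∘ hZ.eigenvalues) := by
    have := hZ.conjStarAlgAut_star_eigenvectorUnitary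
    rw [Unitary.conjStarAlgAut_star_apply] at this
    exact this
  have key : (star U * Z * U) * (star U * Z * U) = star U * (Z * Z) * U := by
    simp only [Matrix.mul_assoc]
    rw [← Matrix.mul_assoc U (star U), hU1, one_mul]
  have h1 : (Z * Z).trace = (star U * (Z * Z) * U).trace := by
    rw [Matrix.trace_mul_cycle, ← Matrix.mul_assoc, hU1, one_mul]
  rw [h1, ← key, hD, diagonal_mul_diagonal, Matrix.trace_diagonal]
  push_cast
  simp [pow_two]

lemma eig_bound' {d : ℕ} (hd : 2 ≤ d) (lam : Fin d → ℝ) (h0 : ∑ k, lam k = 0)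
    (h2 : ∑ k, (lam k) ^ 2 = (d : ℝ)) (k : Fin d) : |lam k| ≤ Real.sqrt ((d : ℝ) - 1) := by
  have hcard : ((Finset.univ.erase k).card : ℝ) = (d : ℝ) - 1 := by
    rw [Finset.card_erase_of_mem (Finset.mem_univ k)]
    simp only [Finset.card_univ, Fintype.card_fin]
    rw [Nat.cast_sub (by omega)]
    norm_num
  have hsum : ∑ j ∈ Finset.univ.erase k, lam j = - lam k := by
    have := Finset.sum_erase_add Finset.univ lam (Finset.mem_univ k)
    rw [h0] at this; linarith
  have hsq : ∑ j ∈ Finset.univ.erase k, (lam j) ^ 2 = (d : ℝ) - (lam k) ^ 2 := by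
    have := Finset.sum_erase_add Finset.univ (fun j => (lam j) ^ 2) (Finset.mem_univ k)
    rw [h2] at this; linarith
  have hCS := sq_sum_le_card_mul_sum_sq (s := Finset.univ.erase k) (f := lam)
  rw [hsum, hcard, hsq] at hCS
  have hd' : (2 : ℝ) ≤ (d : ℝ) := by exact_mod_cast hd
  have hb : (lam k) ^ 2 ≤ (d : ℝ) - 1 := by nlinarith
  calc |lam k| = Real.sqrt ((lam k) ^ 2) := (Real.sqrt_sq_eq_abs _).symm
    _ ≤ Real.sqrt ((d : ℝ) - 1) := Real.sqrt_le_sqrt hb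

lemma psd_shift' {d : ℕ} {Z : Matrix (Fin d) (Fin d) ℂ} (hZ : Z.IsHermitian) {c : ℝ}
    (hc : ∀ k, |hZ.eigenvalues k| ≤ c) (s : ℝ) (hs : |s| = 1) :
    PosSemidef ((c : ℂ) • (1 : Matrix (Fin d) (Fin d) ℂ) - (s : ℂ) • Z) := by
  set U := (hZ.eigenvectorUnitary : Matrix (Fin d) (Fin d) ℂ) with hUdef
  have hU1 : U * star U = 1 := mem_unitaryGroup_iff.mp hZ.eigenvectorUnitary.2
  have hdiag : diagonal (fun k => ((c - s * hZ.eigenvalues k : ℝ) : ℂ)) =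
      (c : ℂ) • (1 : Matrix (Fin d) (Fin d) ℂ)
        - (s : ℂ) • diagonal (RCLike.ofReal ∘ hZ.eigenvalues) := by
    ext i j
    rcases eq_or_ne i j with rfl | hij
    · simp only [Matrix.diagonal_apply_eq, Matrix.sub_apply, Matrix.smul_apply,
        Matrix.one_apply_eq, Function.comp_apply, smul_eq_mul, mul_one]
      push_cast
      norm_num [RCLike.ofReal_alg]
    · simp [Matrix.diagonal_apply_ne _ hij, Matrix.one_apply_ne hij]
  have key : (c : ℂ) • (1 : Matrix (Fin d) (Fin d) ℂ) - (s : ℂ) • Z =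
      U * diagonal (fun k => ((c - s * hZ.eigenvalues k : ℝ) : ℂ)) * star U := by
    rw [hdiag, Matrix.mul_sub, Matrix.sub_mul]
    rw [Matrix.mul_smul, Matrix.smul_mul, Matrix.mul_one, hU1]
    rw [Matrix.mul_smul, Matrix.smul_mul]
    conv_lhs => rw [hZ.spectral_theorem, Unitary.conjStarAlgAut_apply]
  rw [key]
  have hpos : PosSemidef (diagonal (fun k => ((c - s * hZ.eigenvalues k : ℝ) : ℂ))) := by
    refine posSemidef_diagonal_iff.mpr fun k => ?_
    rw [Complex.zero_le_real]
    have h1 : s * hZ.eigenvalues k ≤ |s * hZ.eigenvalues k| := le_abs_self _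
    rw [abs_mul, hs, one_mul] at h1
    have := hc k
    linarith
  have := hpos.mul_mul_conjTranspose_same U
  simpa [Matrix.star_eq_conjTranspose] using this

end CorrAux

/-- If the local operator bases are chosen so that each local Bloch vector
is supported on a single basis element (`X i1` resp. `Y j1`), then for every `q ≥ 1`:
`‖C_AB‖_q ≥ √(d_B-1)‖C_A‖_q + √(d_A-1)‖C_B‖_q - √(d_A-1)√(d_B-1)`. -/
theorem correlation_tensor_qnorm_bound (dA dB : ℕ) (hA : 2 ≤ dA) (hB : 2 ≤ dB)
    (ρ : Matrix (Fin dA × Fin dB) (Fin dA × Fin dB) ℂ)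
    (hρ : ρ.PosSemidef) (hρtr : ρ.trace = 1)
    (X : Fin (dA ^ 2 - 1) → Matrix (Fin dA) (Fin dA) ℂ)
    (Y : Fin (dB ^ 2 - 1) → Matrix (Fin dB) (Fin dB) ℂ)
    (hXh : ∀ i, (X i).IsHermitian) (hX0 : ∀ i, (X i).trace = 0)
    (hXorth : ∀ i j, (X i * X j).trace = if i = j then (dA : ℂ) else 0)
    (hYh : ∀ j, (Y j).IsHermitian) (hY0 : ∀ j, (Y j).trace = 0)
    (hYorth : ∀ i j, (Y i * Y j).trace = if i = j then (dB : ℂ) else 0)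
    (i1 : Fin (dA ^ 2 - 1)) (j1 : Fin (dB ^ 2 - 1))
    (hXsupp : ∀ i, i ≠ i1 → (ρ * (X i ⊗ₖ (1 : Matrix (Fin dB) (Fin dB) ℂ))).trace = 0)
    (hYsupp : ∀ j, j ≠ j1 → (ρ * ((1 : Matrix (Fin dA) (Fin dA) ℂ) ⊗ₖ Y j)).trace = 0)
    (q : ℝ) (hq : 1 ≤ q) :
    (∑ i, ∑ j, ‖(ρ * (X i ⊗ₖ Y j)).trace‖ ^ q) ^ (1 / q) ≥
      Real.sqrt ((dB : ℝ) - 1) *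
        (∑ i, ‖(ρ * (X i ⊗ₖ (1 : Matrix (Fin dB) (Fin dB) ℂ))).trace‖ ^ q) ^ (1 / q)
      + Real.sqrt ((dA : ℝ) - 1) *
        (∑ j, ‖(ρ * ((1 : Matrix (Fin dA) (Fin dA) ℂ) ⊗ₖ Y j)).trace‖ ^ q) ^ (1 / q)
      - Real.sqrt ((dA : ℝ) - 1) * Real.sqrt ((dB : ℝ) - 1) := by
  have hq0 : (0 : ℝ) < q := lt_of_lt_of_le one_pos hq
  have hqne : q ≠ 0 := ne_of_gt hq0
  set cA := Real.sqrt ((dA : ℝ) - 1) with hcA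
  set cB := Real.sqrt ((dB : ℝ) - 1) with hcB
  set a := (ρ * (X i1 ⊗ₖ (1 : Matrix (Fin dB) (Fin dB) ℂ))).trace with ha
  set b := (ρ * ((1 : Matrix (Fin dA) (Fin dA) ℂ) ⊗ₖ Y j1)).trace with hb
  set t := (ρ * (X i1 ⊗ₖ Y j1)).trace with htdef
  -- realness of traces against Hermitian observables
  have hreal : ∀ M : Matrix (Fin dA × Fin dB) (Fin dA × Fin dB) ℂ,
      M.IsHermitian → ((ρ * M).trace).im = 0 := by
    intro M hM
    have h : (starRingEnd ℂ) ((ρ * M).trace) = (ρ * M).trace := by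
      calc (starRingEnd ℂ) ((ρ * M).trace) = ((ρ * M)ᴴ).trace :=
            (Matrix.trace_conjTranspose _).symm
        _ = (Mᴴ * ρᴴ).trace := by rw [Matrix.conjTranspose_mul]
        _ = (M * ρ).trace := by rw [hM.eq, hρ.1.eq]
        _ = (ρ * M).trace := Matrix.trace_mul_comm _ _
    exact Complex.conj_eq_iff_im.mp h
  have hXYh : ∀ i j, ((X i) ⊗ₖ (Y j)).IsHermitian := fun i j => by
    show _ᴴ = _
    rw [kron_conjTranspose', (hXh i).eq, (hYh j).eq]
  have hX1h : ((X i1) ⊗ₖ (1 : Matrix (Fin dB) (Fin dB) ℂ)).IsHermitian := by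
    show _ᴴ = _
    rw [kron_conjTranspose', (hXh i1).eq, Matrix.conjTranspose_one]
  have h1Yh : ((1 : Matrix (Fin dA) (Fin dA) ℂ) ⊗ₖ (Y j1)).IsHermitian := by
    show _ᴴ = _
    rw [kron_conjTranspose', (hYh j1).eq, Matrix.conjTranspose_one]
  have hima : a.im = 0 := hreal _ hX1h
  have himb : b.im = 0 := hreal _ h1Yh
  have himt : t.im = 0 := hreal _ (hXYh i1 j1)
  have hnorm : ∀ z : ℂ, z.im = 0 → ‖z‖ = |z.re| := by
    intro z hz
    have hz' : z = (z.re : ℂ) := Complex.ext rfl (by simp [hz])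
    rw [hz', Complex.norm_real, Real.norm_eq_abs]
    simp
  have hna : ‖a‖ = |a.re| := hnorm a hima
  have hnb : ‖b‖ = |b.re| := hnorm b himb
  have hnt : ‖t‖ = |t.re| := hnorm t himt
  -- eigenvalue bounds
  have hXeig : ∀ k, |(hXh i1).eigenvalues k| ≤ cA := by
    have e0 : ∑ k, (hXh i1).eigenvalues k = 0 := by
      have h := (trace_eq_sum_eig' (hXh i1)).symm.trans (hX0 i1)
      exact_mod_cast h
    have e2 : ∑ k, ((hXh i1).eigenvalues k) ^ 2 = (dA : ℝ) := by
      have h2 : (X i1 * X i1).trace = (dA : ℂ) := by rw [hXorth]; simp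
      have h := (trace_sq_eq_sum_eig' (hXh i1)).symm.trans h2
      exact_mod_cast h
    exact fun k => eig_bound' hA _ e0 e2 k
  have hYeig : ∀ k, |(hYh j1).eigenvalues k| ≤ cB := by
    have e0 : ∑ k, (hYh j1).eigenvalues k = 0 := by
      have h := (trace_eq_sum_eig' (hYh j1)).symm.trans (hY0 j1)
      exact_mod_cast h
    have e2 : ∑ k, ((hYh j1).eigenvalues k) ^ 2 = (dB : ℝ) := by
      have h2 : (Y j1 * Y j1).trace = (dB : ℂ) := by rw [hYorth]; simp
      have h := (trace_sq_eq_sum_eig' (hYh j1)).symm.trans h2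
      exact_mod_cast h
    exact fun k => eig_bound' hB _ e0 e2 k
  -- key positivity inequality
  have key : ∀ s u : ℝ, |s| = 1 → |u| = 1 →
      0 ≤ cA * cB - cA * (u * b.re) - cB * (s * a.re) + (s * u) * t.re := by
    intro s u hs hu
    have hMA := psd_shift' (hXh i1) hXeig s hs
    have hMB := psd_shift' (hYh j1) hYeig u hu
    have hM := kron_posSemidef' hMA hMB
    have h0 := trace_mul_psd_nonneg' hρ hM
    have hexp : (ρ * (((cA : ℂ) • 1 - (s : ℂ) • X i1) ⊗ₖ ((cB : ℂ) • 1 - (u : ℂ) • Y j1))).trace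
        = ((cA : ℂ) * (cB : ℂ)) * 1 - ((cA : ℂ) * (u : ℂ)) * b - ((s : ℂ) * (cB : ℂ)) * a
          + ((s : ℂ) * (u : ℂ)) * t := by
      simp only [sub_kron', kron_sub', smul_kron', kron_smul', Matrix.one_kronecker_one,
        smul_smul, Matrix.mul_sub, Matrix.mul_smul, Matrix.trace_sub, Matrix.trace_smul,
        Matrix.mul_one, hρtr, smul_eq_mul, ← ha, ← hb, ← htdef]
      ring
    rw [hexp] at h0
    have h0re := (Complex.nonneg_iff.mp h0).1
    simp only [Complex.add_re, Complex.sub_re, Complex.mul_re, Complex.mul_im,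
      Complex.ofReal_re, Complex.ofReal_im, Complex.one_re, Complex.one_im,
      zero_mul, mul_zero, sub_zero, zero_sub, add_zero, zero_add, neg_zero] at h0re
    nlinarith [h0re]
  -- choose optimal signs
  set s : ℝ := if 0 ≤ a.re then 1 else -1 with hsdef
  set u : ℝ := if 0 ≤ b.re then 1 else -1 with hudef
  have hs : |s| = 1 := by rw [hsdef]; split <;> simp
  have hu : |u| = 1 := by rw [hudef]; split <;> simp
  have hsa : s * a.re = |a.re| := by
    rw [hsdef]; split <;> rename_i h
    · rw [abs_of_nonneg h, one_mul]
    · rw [abs_of_neg (lt_of_not_ge h)]; ring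
  have hub : u * b.re = |b.re| := by
    rw [hudef]; split <;> rename_i h
    · rw [abs_of_nonneg h, one_mul]
    · rw [abs_of_neg (lt_of_not_ge h)]; ring
  have hkey := key s u hs hu
  rw [hsa, hub] at hkey
  have hstu : (s * u) * t.re ≤ |t.re| := by
    calc (s * u) * t.re ≤ |(s * u) * t.re| := le_abs_self _
      _ = |t.re| := by rw [abs_mul, abs_mul, hs, hu]; ring
  have hcore : cB * |a.re| + cA * |b.re| - cA * cB ≤ |t.re| := by linarith
  -- collapse the marginal sums
  have hpow : ∀ x : ℝ, 0 ≤ x → (x ^ q) ^ (1 / q) = x := by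
    intro x hx
    rw [one_div, Real.rpow_rpow_inv hx hqne]
  have hsumA : (∑ i, ‖(ρ * (X i ⊗ₖ (1 : Matrix (Fin dB) (Fin dB) ℂ))).trace‖ ^ q) = ‖a‖ ^ q := by
    rw [Finset.sum_eq_single i1]
    · intro i _ hi
      rw [hXsupp i hi, norm_zero, Real.zero_rpow hqne]
    · intro h
      exact absurd (Finset.mem_univ i1) h
  have hsumB : (∑ j, ‖(ρ * ((1 : Matrix (Fin dA) (Fin dA) ℂ) ⊗ₖ Y j)).trace‖ ^ q) = ‖b‖ ^ q := by
    rw [Finset.sum_eq_single j1]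
    · intro j _ hj
      rw [hYsupp j hj, norm_zero, Real.zero_rpow hqne]
    · intro h
      exact absurd (Finset.mem_univ j1) h
  -- lower bound on the full sum
  have h1 : ‖t‖ ^ q ≤ ∑ j, ‖(ρ * (X i1 ⊗ₖ Y j)).trace‖ ^ q := by
    have := Finset.single_le_sum (f := fun j => ‖(ρ * (X i1 ⊗ₖ Y j)).trace‖ ^ q)
      (fun j _ => Real.rpow_nonneg (norm_nonneg _) q) (Finset.mem_univ j1)
    simpa [← htdef] using this
  have h2 : (∑ j, ‖(ρ * (X i1 ⊗ₖ Y j)).trace‖ ^ q) ≤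
      ∑ i, ∑ j, ‖(ρ * (X i ⊗ₖ Y j)).trace‖ ^ q :=
    Finset.single_le_sum (f := fun i => ∑ j, ‖(ρ * (X i ⊗ₖ Y j)).trace‖ ^ q)
      (fun i _ => Finset.sum_nonneg fun j _ => Real.rpow_nonneg (norm_nonneg _) q)
      (Finset.mem_univ i1)
  have hLHS : ‖t‖ ≤ (∑ i, ∑ j, ‖(ρ * (X i ⊗ₖ Y j)).trace‖ ^ q) ^ (1 / q) := by
    calc ‖t‖ = (‖t‖ ^ q) ^ (1 / q) := (hpow _ (norm_nonneg _)).symm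
      _ ≤ _ := Real.rpow_le_rpow (Real.rpow_nonneg (norm_nonneg _) q) (le_trans h1 h2)
          (by positivity)
  rw [ge_iff_le, hsumA, hsumB, hpow _ (norm_nonneg a), hpow _ (norm_nonneg b), hna, hnb]
  rw [hnt] at hLHS
  linarith
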